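/- Let A be a finite-dimensional simple associative Γ-graded commutative algebra over ℝ whose degree-zero component A₀ is isomorphic to ℂ. Then every nonzero homogeneous component A_γ is 2-dimensional over ℝ and contains elements α₊, α₋ with α₊² = 1 and α₋² = -1. -/

import Mathlib

/-- Let `A` be a finite-dimensional simple associative `(ℤ/2)ⁿ`-graded
commutative ℝ-algebra (standard scalar product) whose degree-zero component `A₀` is
isomorphic to ℂ as an ℝ-algebra.  Then every nonzero homogeneous component `A_γ` is
2-dimensional over ℝ and contains elements `α₊, α₋` with `α₊² = 1` and `α₋² = -1`. -/
theorem stmt14 {n : ℕ} {A : Type*} [Ring A] [Algebra ℝ A] [FiniteDimensional ℝ A]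
    (𝒜 : (Fin n → ZMod 2) → Submodule ℝ A) (hgr : GradedAlgebra 𝒜)
    (hcomm : ∀ (γ γ' : Fin n → ZMod 2) (a b : A), a ∈ 𝒜 γ → b ∈ 𝒜 γ' →
      a * b = (-1 : A) ^ (∑ i, γ i * γ' i).val * (b * a))
    (hsimple : IsSimpleRing A)
    (hA0 : ∃ S : Subalgebra ℝ A, Subalgebra.toSubmodule S = 𝒜 (0 : Fin n → ZMod 2) ∧
      Nonempty (S ≃ₐ[ℝ] ℂ)) :
    ∀ γ : Fin n → ZMod 2, 𝒜 γ ≠ ⊥ →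
      Module.finrank ℝ (𝒜 γ) = 2 ∧
      (∃ αp ∈ 𝒜 γ, αp * αp = 1) ∧ (∃ αm ∈ 𝒜 γ, αm * αm = -1) := by
  haveI := hgr
  obtain ⟨S, hS, ⟨e⟩⟩ := hA0
  have hmemS : ∀ x : A, x ∈ S ↔ x ∈ 𝒜 (0 : Fin n → ZMod 2) := by
    intro x
    rw [← hS]
    exact Iff.rfl
  -- every element of `𝒜 0` is central
  have hcentral : ∀ z ∈ 𝒜 (0 : Fin n → ZMod 2), ∀ b : A, z * b = b * z := by
    intro z hz b
    refine DirectSum.Decomposition.inductionOn 𝒜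
      (motive := fun b => z * b = b * z) (by simp) ?_ ?_ b
    · intro i m
      have := hcomm 0 i z m hz m.2
      simpa using this
    · intro m m' hm hm'
      rw [mul_add, add_mul, hm, hm']
  intro γ hγ
  have hγγ : γ + γ = 0 := by
    funext i
    exact CharTwo.add_self_eq_zero (γ i)
  obtain ⟨a, ha, hane⟩ := (Submodule.ne_bot_iff (𝒜 γ)).mp hγ
  -- swap lemma: a * y = d * a for some d
  have hswap : ∀ y : A, ∃ d : A, a * y = d * a := by
    intro y
    refine DirectSum.Decomposition.inductionOn 𝒜
      (motive := fun y => ∃ d : A, a * y = d * a) ⟨0, by simp⟩ ?_ ?_ y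
    · intro i m
      refine ⟨(-1 : A) ^ (∑ j, γ j * i j).val * m, ?_⟩
      rw [hcomm γ i a m ha m.2, mul_assoc]
    · rintro m m' ⟨d, hd⟩ ⟨d', hd'⟩
      exact ⟨d + d', by rw [mul_add, hd, hd', add_mul]⟩
  -- left inverse of a via simplicity
  obtain ⟨c, hc⟩ : ∃ c : A, c * a = 1 := by
    let I : TwoSidedIdeal A := TwoSidedIdeal.mk' {x | ∃ c : A, x = c * a}
      ⟨0, by simp⟩
      (fun {x y} ⟨c, hc⟩ ⟨c', hc'⟩ => ⟨c + c', by rw [hc, hc', add_mul]⟩)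
      (fun {x} ⟨c, hc⟩ => ⟨-c, by rw [hc, neg_mul]⟩)
      (fun {x y} ⟨c, hc⟩ => ⟨x * c, by rw [hc, mul_assoc]⟩)
      (fun {x y} ⟨c, hc⟩ => by
        obtain ⟨d, hd⟩ := hswap y
        exact ⟨c * d, by rw [hc, mul_assoc, hd, mul_assoc]⟩)
    have haI : a ∈ I := by
      rw [TwoSidedIdeal.mem_mk']
      exact ⟨1, (one_mul a).symm⟩
    have hIbot : I ≠ ⊥ := by
      intro h
      rw [h] at haI
      exact hane ((TwoSidedIdeal.mem_bot A).mp haI)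
    have hItop : I = ⊤ := (hsimple.simple.eq_bot_or_eq_top I).resolve_left hIbot
    have h1 : (1 : A) ∈ I := by rw [hItop]; trivial
    rw [TwoSidedIdeal.mem_mk'] at h1
    obtain ⟨c, hc⟩ := h1
    exact ⟨c, hc.symm⟩
  -- w = a * a is a nonzero element of 𝒜 0
  set w : A := a * a with hw
  have hwmem : w ∈ 𝒜 (0 : Fin n → ZMod 2) := hγγ ▸ SetLike.mul_mem_graded ha ha
  have hwne : w ≠ 0 := by
    intro h
    apply hane
    calc a = (c * a) * a := by rw [hc, one_mul]
    _ = c * w := by rw [mul_assoc]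
    _ = 0 := by rw [h, mul_zero]
  -- square roots of ±w⁻¹ in S ≅ ℂ
  set ws : S := ⟨w, (hmemS w).mpr hwmem⟩ with hws
  have hwsne : e ws ≠ 0 := by
    intro h
    apply hwne
    have : ws = 0 := e.injective (by rw [h, map_zero])
    exact congrArg Subtype.val this
  obtain ⟨u, hu⟩ := IsAlgClosed.exists_pow_nat_eq ((e ws)⁻¹) (n := 2) zero_lt_two
  obtain ⟨u', hu'⟩ := IsAlgClosed.exists_pow_nat_eq (-(e ws)⁻¹) (n := 2) zero_lt_two
  set cs : S := e.symm u with hcs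
  set cs' : S := e.symm u' with hcs'
  have hcsq : cs * cs * ws = 1 := by
    apply e.injective
    rw [map_mul, map_mul, map_one, hcs, e.apply_symm_apply]
    rw [show u * u = u ^ 2 from (sq u).symm, hu]
    exact inv_mul_cancel₀ hwsne
  have hcsq' : cs' * cs' * ws = -1 := by
    apply e.injective
    rw [map_mul, map_mul, map_neg, map_one, hcs', e.apply_symm_apply]
    rw [show u' * u' = u' ^ 2 from (sq u').symm, hu']
    rw [neg_mul]
    rw [inv_mul_cancel₀ hwsne]
  set cp : A := (cs : A) with hcp
  set cm : A := (cs' : A) with hcm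
  have hcpmem : cp ∈ 𝒜 (0 : Fin n → ZMod 2) := (hmemS _).mp cs.2
  have hcmmem : cm ∈ 𝒜 (0 : Fin n → ZMod 2) := (hmemS _).mp cs'.2
  have hcpw : cp * cp * w = 1 := by
    have := congrArg (Subtype.val : S → A) hcsq
    simpa using this
  have hcmw : cm * cm * w = -1 := by
    have := congrArg (Subtype.val : S → A) hcsq'
    simpa using this
  -- the elements αp and αm
  have key : ∀ d : A, d ∈ 𝒜 (0 : Fin n → ZMod 2) → (d * a) * (d * a) = d * d * w := by
    intro d hd
    have hda : a * d = d * a := (hcentral d hd a).symm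
    calc (d * a) * (d * a) = d * ((a * d) * a) := by rw [mul_assoc, mul_assoc]
    _ = d * ((d * a) * a) := by rw [hda]
    _ = d * d * w := by rw [hw, mul_assoc, mul_assoc]
  have hαpmem : cp * a ∈ 𝒜 γ := by
    have := SetLike.mul_mem_graded hcpmem ha
    rwa [zero_add] at this
  have hαmmem : cm * a ∈ 𝒜 γ := by
    have := SetLike.mul_mem_graded hcmmem ha
    rwa [zero_add] at this
  refine ⟨?_, ⟨cp * a, hαpmem, by rw [key cp hcpmem, hcpw]⟩,
    ⟨cm * a, hαmmem, by rw [key cm hcmmem, hcmw]⟩⟩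
  -- dimension count: 𝒜 γ ≃ 𝒜 0 via right multiplication by a
  set v : A := cp * cp with hv
  have hvmem : v ∈ 𝒜 (0 : Fin n → ZMod 2) := by
    have := SetLike.mul_mem_graded hcpmem hcpmem
    rwa [add_zero] at this
  have hwv : w * v = 1 := by rw [hcentral w hwmem v, hv, hcpw]
  let f : (𝒜 (0 : Fin n → ZMod 2)) →ₗ[ℝ] (𝒜 γ) :=
    { toFun := fun z => ⟨z.1 * a, by
        have := SetLike.mul_mem_graded z.2 ha
        rwa [zero_add] at this⟩
      map_add' := fun x y => by ext; simp [add_mul]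
      map_smul' := fun r x => by ext; simp [smul_mul_assoc] }
  have hinj : Function.Injective f := by
    intro x y hxy
    have hval : x.1 * a = y.1 * a := congrArg Subtype.val hxy
    have h0 : (x.1 - y.1) * a = 0 := by
      rw [sub_mul, hval, sub_self]
    ext
    have h1 : (x.1 - y.1) * w = 0 := by
      rw [hw, ← mul_assoc, h0, zero_mul]
    have : (x.1 - y.1) = 0 := by
      calc x.1 - y.1 = (x.1 - y.1) * (w * v) := by rw [hwv, mul_one]
      _ = ((x.1 - y.1) * w) * v := (mul_assoc _ w v).symm
      _ = 0 := by rw [h1, zero_mul]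
    exact sub_eq_zero.mp this
  have hsurj : Function.Surjective f := by
    rintro ⟨b, hb⟩
    have hbamem : b * a ∈ 𝒜 (0 : Fin n → ZMod 2) := hγγ ▸ SetLike.mul_mem_graded hb ha
    have hzmem : (b * a) * v ∈ 𝒜 (0 : Fin n → ZMod 2) := by
      have := SetLike.mul_mem_graded hbamem hvmem
      rwa [add_zero] at this
    refine ⟨⟨(b * a) * v, hzmem⟩, ?_⟩
    ext
    show ((b * a) * v) * a = b
    calc ((b * a) * v) * a = (b * a) * (v * a) := by rw [mul_assoc]
    _ = (b * a) * (a * v) := by rw [hcentral v hvmem a]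
    _ = b * ((a * a) * v) := by rw [mul_assoc, mul_assoc]
    _ = b * 1 := by rw [← hw, hwv]
    _ = b := mul_one b
  have hequiv : (𝒜 (0 : Fin n → ZMod 2)) ≃ₗ[ℝ] (𝒜 γ) :=
    LinearEquiv.ofBijective f ⟨hinj, hsurj⟩
  have h1 : Module.finrank ℝ (𝒜 γ) = Module.finrank ℝ (𝒜 (0 : Fin n → ZMod 2)) :=
    hequiv.finrank_eq.symm
  have h2 : Module.finrank ℝ (𝒜 (0 : Fin n → ZMod 2)) = Module.finrank ℝ S := by
    rw [← hS]
    rfl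
  have h3 : Module.finrank ℝ S = Module.finrank ℝ ℂ := e.toLinearEquiv.finrank_eq
  rw [h1, h2, h3, Complex.finrank_real_complex]
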